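/- In an interval I(h) with header h, every closed (cyclic) directed path whose nodes all lie in I(h) must contain the header h. -/

import Mathlib

/-- Allen's interval construction with header `h`, given already-covered nodes. -/
inductive InInterval {V : Type*} (E : V → V → Prop) (covered : Set V) (h : V) : V → Prop
  | head : InInterval E covered h h
  | step (v : V) : v ≠ h → v ∉ covered → (∀ u, E u v → InInterval E covered h u) →
      InInterval E covered h v

/-- In a closed chain of length ≥ 2, every member has a predecessor in the chain. -/
lemma pred_in_cycle {V : Type*} {E : V → V → Prop} {l : List V}
    (hlen : 2 ≤ l.length) (hchain : l.Chain' E) (hclosed : l.head? = l.getLast?)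
    {v : V} (hv : v ∈ l) : ∃ u ∈ l, E u v := by
  obtain ⟨i, hi⟩ := List.get_of_mem hv
  rcases Nat.eq_zero_or_pos i.1 with h0 | hpos
  · -- v is the head, so it's also the last; predecessor is at length - 2
    have hne : l ≠ [] := by
      intro h; simp [h] at hlen
    have hlast : l.get ⟨l.length - 1, by omega⟩ = v := by
      have h1 : l.head? = some v := by
        rw [← hi]
        have : i = ⟨0, by omega⟩ := Fin.ext h0
        rw [this]
        cases l with
        | nil => simp at hlen
        | cons a t => simp
      have h2 : l.getLast? = some (l.get ⟨l.length - 1, by omega⟩) := by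
        rw [List.getLast?_eq_getLast hne, List.getLast_eq_getElem]; rfl
      rw [hclosed, h2] at h1
      exact Option.some_injective _ h1
    refine ⟨l.get ⟨l.length - 2, by omega⟩, List.get_mem _ _, ?_⟩
    have := (List.isChain_iff_getElem.mp hchain) (l.length - 2) (by omega)
    have hfin : (⟨l.length - 2 + 1, by omega⟩ : Fin l.length) = ⟨l.length - 1, by omega⟩ :=
      Fin.ext (by simp only [Fin.val_mk]; omega)
    simp only [List.get_eq_getElem] at hlast ⊢
    rw [← hlast]; convert this using 2; omega
  · refine ⟨l.get ⟨i.1 - 1, by omega⟩, List.get_mem _ _, ?_⟩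
    have := (List.isChain_iff_getElem.mp hchain) (i.1 - 1) (by omega)
    have hfin : (⟨i.1 - 1 + 1, by omega⟩ : Fin l.length) = i := Fin.ext (by simp; omega)
    simp only [List.get_eq_getElem] at hi ⊢
    rw [← hi]; convert this using 2; omega

/-- every closed directed path whose nodes all lie in the interval I(h)
must contain the header `h`. A closed path is represented by a list of at least two
nodes, consecutive nodes joined by edges, whose first and last nodes coincide. -/
theorem stmt6 {V : Type*} (E : V → V → Prop) (covered : Set V) (h : V)
    (l : List V) (hlen : 2 ≤ l.length) (hchain : l.Chain' E)
    (hclosed : l.head? = l.getLast?)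
    (hmem : ∀ v ∈ l, InInterval E covered h v) :
    h ∈ l := by
  by_contra hh
  have key : ∀ v, InInterval E covered h v → v ∉ l := by
    intro v hv
    induction hv with
    | head => exact hh
    | step v hne hnc hpred ih =>
      intro hvl
      obtain ⟨u, hul, hedge⟩ := pred_in_cycle hlen hchain hclosed hvl
      exact ih u hedge hul
  have hne : l ≠ [] := by intro h'; simp [h'] at hlen
  obtain ⟨a, t, rfl⟩ := List.exists_cons_of_ne_nil hne
  exact key a (hmem a (by simp)) (by simp)
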